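/- Let u be a negative Lebesgue-measurable function on the open unit ball 𝔹^{2n} of ℂⁿ, and suppose there exists A > 0 such that lim_{d→0⁺} Vol_{2n}({ξ ∈ 𝔹^{2n} : ‖ξ‖ > 1-d and u(ξ) < -Ad}) / d = 0. For z ≠ 0 and 0 < a, ε < 1/2, let B_{a,ε,z} = {ξ ∈ ℂⁿ \ {0} : ‖z/‖z‖ - ξ/‖ξ‖‖ < a and ‖z‖ ≤ ‖ξ‖ ≤ (1+ε)‖z‖}. Then for every a ∈ (0, 1/2) there exists ε_a > 0 such that sup_{ξ ∈ B_{a,ε,z}} u(ξ) ≥ -3Aε whenever ε and z ∈ 𝔹^{2n} satisfy ε_a > 3ε ≥ 1-‖z‖ ≥ ε > 0. -/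

import Mathlib

open MeasureTheory Filter Metric Topology ENNReal

noncomputable section

/-- `ℂⁿ` with its Euclidean structure. -/
abbrev Cn (n : ℕ) : Type := EuclideanSpace ℂ (Fin n)

instance (n : ℕ) : MeasurableSpace (Cn n) := MeasurableSpace.comap WithLp.ofLp MeasurableSpace.pi

instance (n : ℕ) : BorelSpace (Cn n) := ⟨(PiLp.borelSpace 2 (X := fun _ : Fin n => ℂ)).measurable_eq⟩

instance (n : ℕ) : MeasureSpace (Cn n) :=
  ⟨Measure.map (WithLp.toLp 2) (MeasureTheory.MeasureSpace.pi.volume : Measure (Fin n → ℂ))⟩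

variable {n : ℕ}

/-- The "positive part" of an extended real number, as an element of `ℝ≥0∞`. -/
def EReal.posPart (x : EReal) : ℝ≥0∞ := if x = ⊤ then ⊤ else ENNReal.ofReal x.toReal

/-- The (possibly infinite) integral of an `EReal`-valued function, defined as the
difference of the lower integrals of its positive and negative parts. -/
def erealIntegral {α : Type*} [MeasurableSpace α] (μ : Measure α) (f : α → EReal) : EReal :=
  ((∫⁻ a, (f a).posPart ∂μ : ℝ≥0∞) : EReal) - ((∫⁻ a, (-(f a)).posPart ∂μ : ℝ≥0∞) : EReal)

/-- A function `u : ℂⁿ → [-∞, ∞)` is plurisubharmonic on an (open) set `Ω` if it is upper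
semicontinuous on `Ω`, takes values in `[-∞, ∞)` on `Ω`, and satisfies the sub-mean value
inequality on every circle (inside `Ω`) contained in a complex line. -/
def PlurisubharmonicOn (Ω : Set (Cn n)) (u : Cn n → EReal) : Prop :=
  UpperSemicontinuousOn u Ω ∧ (∀ z ∈ Ω, u z ≠ ⊤) ∧
  ∀ z ∈ Ω, ∀ w : Cn n, ∀ r : ℝ, 0 < r →
    (∀ c : ℂ, ‖c‖ ≤ r → z + c • w ∈ Ω) →
    ((2 * Real.pi : ℝ) : EReal) * u z ≤
      erealIntegral (volume.restrict (Set.Ioc (0 : ℝ) (2 * Real.pi)))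
        (fun θ => u (z + ((r : ℂ) * Complex.exp (θ * Complex.I)) • w))

/-- The second derivative of `f` at `z` evaluated on the pair of vectors `(v, w)`. -/
def hess2 (f : Cn n → ℝ) (z v w : Cn n) : ℝ := iteratedFDeriv ℝ 2 f z ![v, w]

/-- The (diagonal of the) Levi form `L_f(z; v) = ∑ ∂²f/∂z_j∂z̄_k v_j v̄_k` of a real-valued
`C²` function, expressed via real second derivatives. -/
def leviForm (f : Cn n → ℝ) (z v : Cn n) : ℝ :=
  (hess2 f z v v + hess2 f z ((Complex.I : ℂ) • v) ((Complex.I : ℂ) • v)) / 4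

/-- The complex derivative `∂f(z)(v) = ∑_j ∂f/∂z_j(z) v_j` of a real-valued function. -/
def wirtingerDeriv (f : Cn n → ℝ) (z v : Cn n) : ℂ :=
  (((fderiv ℝ f z v : ℝ) : ℂ) - Complex.I * ((fderiv ℝ f z ((Complex.I : ℂ) • v) : ℝ) : ℂ)) / 2

/-- The complex Hessian matrix `(∂²f/∂z_j∂z̄_k(z))_{j,k}` of a real-valued function,
expressed via real second derivatives. -/
def complexHessian (f : Cn n → ℝ) (z : Cn n) : Matrix (Fin n) (Fin n) ℂ :=
  Matrix.of fun j k =>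
    (((hess2 f z (EuclideanSpace.single j 1) (EuclideanSpace.single k 1)
        + hess2 f z ((Complex.I : ℂ) • EuclideanSpace.single j 1)
            ((Complex.I : ℂ) • EuclideanSpace.single k 1)) / 4 : ℝ) : ℂ)
    + Complex.I * (((hess2 f z (EuclideanSpace.single j 1)
            ((Complex.I : ℂ) • EuclideanSpace.single k 1)
        - hess2 f z ((Complex.I : ℂ) • EuclideanSpace.single j 1)
            (EuclideanSpace.single k 1)) / 4 : ℝ) : ℂ)

/-- The density of the Monge–Ampère measure `(dd^c f)^n` of a `C²` function `f` with respect
to Lebesgue measure: `(dd^c f)^n = 4^n n! det(∂²f/∂z_j∂z̄_k) dV`. -/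
def maDensity (f : Cn n → ℝ) (z : Cn n) : ℝ :=
  (4 : ℝ) ^ n * (Nat.factorial n) * ((complexHessian f z).det).re

/-- `v` is a decreasing sequence of `C²` plurisubharmonic functions on `Ω`
converging pointwise to `u`. -/
def IsSmoothPshApprox (Ω : Set (Cn n)) (u : Cn n → EReal) (v : ℕ → Cn n → ℝ) : Prop :=
  (∀ j, ContDiffOn ℝ 2 (v j) Ω) ∧
  (∀ j, PlurisubharmonicOn Ω fun z => ((v j z : ℝ) : EReal)) ∧
  (∀ z ∈ Ω, Antitone fun j => v j z) ∧
  (∀ z ∈ Ω, Tendsto (fun j => ((v j z : ℝ) : EReal)) atTop (nhds (u z)))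

/-- `μ` is the (Bedford–Taylor–Cegrell) Monge–Ampère measure `(dd^c u)^n` of `u` on `Ω`:
there is at least one decreasing `C²` plurisubharmonic approximation of `u` on `Ω`, and along
every such approximation the smooth Monge–Ampère measures converge weakly to `μ`. -/
def IsMongeAmpereOf (Ω : Set (Cn n)) (u : Cn n → EReal) (μ : Measure (Cn n)) : Prop :=
  (∃ v, IsSmoothPshApprox Ω u v) ∧
  ∀ v, IsSmoothPshApprox Ω u v →
    ∀ f : Cn n → ℝ, Continuous f → HasCompactSupport f → tsupport f ⊆ Ω →
      Tendsto (fun j => ∫ z in Ω, f z * maDensity (v j) z) atTop (nhds (∫ z, f z ∂μ))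

/-- The Monge–Ampère measure `(dd^c u)^n` of `u` on `Ω` (junk value if it does not exist). -/
def mongeAmpere (Ω : Set (Cn n)) (u : Cn n → EReal) : Measure (Cn n) :=
  letI := Classical.propDecidable (∃ μ, IsMongeAmpereOf Ω u μ)
  if h : ∃ μ, IsMongeAmpereOf Ω u μ then h.choose else 0

/-- The Cegrell class `𝓔₀(Ω)`: bounded plurisubharmonic functions on `Ω` with boundary
limit `0` and finite total Monge–Ampère mass. -/
def InE0 (Ω : Set (Cn n)) (u : Cn n → EReal) : Prop :=
  PlurisubharmonicOn Ω u ∧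
  (∃ C : ℝ, ∀ z ∈ Ω, ((-C : ℝ) : EReal) ≤ u z ∧ u z ≤ ((C : ℝ) : EReal)) ∧
  (∀ ξ ∈ frontier Ω, Tendsto u (nhdsWithin ξ Ω) (nhds (0 : EReal))) ∧
  mongeAmpere Ω u Ω < ⊤

/-- The Cegrell class `𝓕(Ω)`: plurisubharmonic `u` admitting a decreasing sequence in
`𝓔₀(Ω)` converging pointwise to `u` with uniformly bounded Monge–Ampère masses. -/
def InCegrellF (Ω : Set (Cn n)) (u : Cn n → EReal) : Prop :=
  PlurisubharmonicOn Ω u ∧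
  ∃ v : ℕ → Cn n → EReal,
    (∀ j, InE0 Ω (v j)) ∧
    (∀ z ∈ Ω, Antitone fun j => v j z) ∧
    (∀ z ∈ Ω, Tendsto (fun j => v j z) atTop (nhds (u z))) ∧
    (⨆ j, mongeAmpere Ω (v j) Ω) < ⊤

/-- A bounded strictly pseudoconvex domain: a bounded domain `Ω = {ρ < 0}` for some `C²`
defining function `ρ` on a neighborhood of `closure Ω` with nonvanishing gradient on `∂Ω`
and `dd^c ρ ≥ c · dd^c |z|²` for some `c > 0`. -/
def IsStrictlyPseudoconvexDomain (Ω : Set (Cn n)) : Prop :=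
  IsOpen Ω ∧ IsConnected Ω ∧ Bornology.IsBounded Ω ∧
  ∃ (U : Set (Cn n)) (ρ : Cn n → ℝ) (c : ℝ),
    IsOpen U ∧ closure Ω ⊆ U ∧ ContDiffOn ℝ 2 ρ U ∧
    Ω = {z ∈ U | ρ z < 0} ∧
    (∀ z ∈ frontier Ω, fderiv ℝ ρ z ≠ 0) ∧
    0 < c ∧ (∀ z ∈ U, ∀ v : Cn n, c * ‖v‖ ^ 2 ≤ leviForm ρ z v)

/-- A bounded hyperconvex domain: a bounded domain carrying a negative plurisubharmonic
exhaustion function. -/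
def IsHyperconvexDomain (Ω : Set (Cn n)) : Prop :=
  IsOpen Ω ∧ IsConnected Ω ∧ Bornology.IsBounded Ω ∧
  ∃ φ : Cn n → EReal, PlurisubharmonicOn Ω φ ∧ (∀ z ∈ Ω, φ z < 0) ∧
    ∀ c : ℝ, c < 0 →
      IsCompact (closure {z ∈ Ω | φ z < (c : EReal)}) ∧
        closure {z ∈ Ω | φ z < (c : EReal)} ⊆ Ω

/-- A maximal plurisubharmonic function on `Ω`. -/
def IsMaximalPSH (Ω : Set (Cn n)) (u : Cn n → EReal) : Prop :=
  PlurisubharmonicOn Ω u ∧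
  ∀ v, PlurisubharmonicOn Ω v → ∀ K : Set (Cn n), IsCompact K → K ⊆ Ω →
    (∀ z ∈ Ω \ K, v z ≤ u z) → ∀ z ∈ Ω, v z ≤ u z

/-- The Cegrell class `𝓝(Ω)`: plurisubharmonic functions in the domain of definition of the
Monge–Ampère operator whose smallest maximal plurisubharmonic majorant is identically zero. -/
def InClassN (Ω : Set (Cn n)) (u : Cn n → EReal) : Prop :=
  PlurisubharmonicOn Ω u ∧ (∃ μ, IsMongeAmpereOf Ω u μ) ∧ (∀ z ∈ Ω, u z ≤ 0) ∧
  ∀ w, IsMaximalPSH Ω w → (∀ z ∈ Ω, u z ≤ w z) → ∀ z ∈ Ω, (0 : EReal) ≤ w z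

/-- The upper semicontinuous regularization `v*` of a function `v`. -/
def uscRegularization (f : Cn n → EReal) (z : Cn n) : EReal := Filter.limsup f (nhds z)


open scoped Pointwise

lemma bernoulli_aux (m : ℕ) (hm : 1 ≤ m) (ε : ℝ) (hε : 0 < ε) : ε ≤ (1+ε)^m - 1 := by
  have hbern := one_add_mul_le_pow (by linarith : (-2:ℝ) ≤ ε) m
  have hdc : (1:ℝ) ≤ (m : ℝ) := by exact_mod_cast hm
  have hstep : ε ≤ (m : ℝ) * ε := le_mul_of_one_le_left hε.le hdc
  linarith

lemma dir_smul {E : Type*} [NormedAddCommGroup E] [NormedSpace ℝ E] {t : ℝ} (ht : 0 < t) (η : E) :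
    ‖t • η‖⁻¹ • (t • η) = ‖η‖⁻¹ • η := by
  rw [norm_smul, Real.norm_eq_abs, abs_of_pos ht, mul_inv, smul_smul]
  congr 1
  rw [mul_comm (t⁻¹) _, mul_assoc, inv_mul_cancel₀ ht.ne', mul_one]

instance (n : ℕ) : (volume : Measure (Cn n)).IsAddHaarMeasure :=
  (PiLp.continuousLinearEquiv 2 ℂ (fun _ : Fin n => ℂ)).symm.isAddHaarMeasure_map
    (MeasureTheory.MeasureSpace.pi.volume : Measure (Fin n → ℂ))

set_option maxHeartbeats 1000000 in
theorem statement_15 {n : ℕ} (u : Cn n → EReal) (hmeas : Measurable u)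
    (hneg : ∀ z ∈ Metric.ball (0 : Cn n) 1, u z < 0)
    (A : ℝ) (hA : 0 < A)
    (hlim : Filter.Tendsto (fun d : ℝ =>
        volume {ξ | ξ ∈ Metric.ball (0 : Cn n) 1 ∧ 1 - d < ‖ξ‖ ∧
            u ξ < ((-(A * d) : ℝ) : EReal)}
          / ENNReal.ofReal d) (nhdsWithin 0 (Set.Ioi 0)) (nhds 0)) :
    ∀ a : ℝ, 0 < a → a < 1 / 2 → ∃ εa : ℝ, 0 < εa ∧
      ∀ (ε : ℝ) (z : Cn n), 0 < ε → ε ≤ 1 - ‖z‖ → 1 - ‖z‖ ≤ 3 * ε → 3 * ε < εa →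
        ((-(3 * A * ε) : ℝ) : EReal) ≤
          ⨆ ξ ∈ {ξ : Cn n | ξ ≠ 0 ∧ ‖(‖z‖)⁻¹ • z - (‖ξ‖)⁻¹ • ξ‖ < a ∧
            ‖z‖ ≤ ‖ξ‖ ∧ ‖ξ‖ ≤ (1 + ε) * ‖z‖}, u ξ := by
  intro a ha ha2
  set c0 : ℝ≥0∞ := volume (Metric.ball (0 : Cn n) (a/8)) with hc0
  have hc0pos : 0 < c0 := measure_ball_pos _ _ (by positivity)
  have hc0top : c0 ≠ ⊤ := measure_ball_lt_top.ne
  set C : ℝ≥0∞ := ENNReal.ofReal ((2:ℝ)⁻¹ ^ (Module.finrank ℝ (Cn n))) * c0 with hCdef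
  have hCpos : C ≠ 0 := by
    apply mul_ne_zero _ hc0pos.ne'
    rw [Ne, ENNReal.ofReal_eq_zero, not_le]
    positivity
  have hev : ∀ᶠ t in nhdsWithin (0:ℝ) (Set.Ioi 0),
      volume {ξ | ξ ∈ Metric.ball (0 : Cn n) 1 ∧ 1 - t < ‖ξ‖ ∧ u ξ < ((-(A * t) : ℝ) : EReal)}
        / ENNReal.ofReal t < C / 3 :=
    hlim.eventually (gt_mem_nhds (ENNReal.div_pos hCpos (by norm_num)))
  rw [eventually_nhdsWithin_iff, Metric.eventually_nhds_iff] at hev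
  obtain ⟨e0, he0pos, he0⟩ := hev
  refine ⟨min e0 (1/2), lt_min he0pos (by norm_num), ?_⟩
  intro ε z hε hε1 hε3 hεa
  have hεa1 : 3 * ε < e0 := lt_of_lt_of_le hεa (min_le_left _ _)
  have hεa2 : 3 * ε < 1/2 := lt_of_lt_of_le hεa (min_le_right _ _)
  have hz2 : (2:ℝ)⁻¹ < ‖z‖ := by
    rw [show ((2:ℝ)⁻¹ = 1/2) by norm_num]; linarith
  have hzpos : (0:ℝ) < ‖z‖ := by linarith [hz2]
  have hz0 : z ≠ 0 := norm_pos_iff.mp hzpos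
  haveI : Nontrivial (Cn n) := nontrivial_of_ne z 0 hz0
  have hd1 : 1 ≤ Module.finrank ℝ (Cn n) := Module.finrank_pos
  by_contra hcon
  rw [not_le] at hcon
  set e : Cn n := ‖z‖⁻¹ • z with he
  have hnorme : ‖e‖ = 1 := by
    rw [he, norm_smul, norm_inv, norm_norm, inv_mul_cancel₀ hzpos.ne']
  set B : Set (Cn n) := {ξ : Cn n | ξ ≠ 0 ∧ ‖e - (‖ξ‖)⁻¹ • ξ‖ < a ∧
      ‖z‖ ≤ ‖ξ‖ ∧ ‖ξ‖ ≤ (1 + ε) * ‖z‖} with hB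
  set K : Set (Cn n) := {ξ : Cn n | ξ ≠ 0 ∧ ‖e - (‖ξ‖)⁻¹ • ξ‖ < a ∧ ‖ξ‖ ≤ 1} with hK
  set D : Set (Cn n) := {ξ : Cn n | ξ ≠ 0 ∧ ‖e - (‖ξ‖)⁻¹ • ξ‖ < a ∧ 1 ≤ ‖ξ‖ ∧ ‖ξ‖ ≤ 1 + ε}
    with hD
  -- the ball of radius a/8 around e/2 is inside K
  have hballK : Metric.ball ((2⁻¹ : ℝ) • e) (a/8) ⊆ K := by
    intro ξ hξ
    rw [mem_ball_iff_norm] at hξ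
    have hc : ‖(2⁻¹:ℝ) • e‖ = 2⁻¹ := by
      rw [norm_smul, hnorme, mul_one, Real.norm_eq_abs, abs_of_pos (by norm_num)]
    have htri : |‖ξ‖ - 2⁻¹| ≤ ‖ξ - (2⁻¹:ℝ) • e‖ := by
      have h' : |‖ξ‖ - ‖(2⁻¹:ℝ) • e‖| ≤ ‖ξ - (2⁻¹:ℝ) • e‖ := abs_norm_sub_norm_le _ _
      rwa [hc] at h'
    have habs := lt_of_le_of_lt htri hξ
    rw [abs_lt] at habs
    obtain ⟨habs1, habs2⟩ := habs
    have hξpos : (0:ℝ) < ‖ξ‖ := by linarith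
    have hξ0 : ξ ≠ 0 := norm_pos_iff.mp hξpos
    refine ⟨hξ0, ?_, by linarith⟩
    have key : e - (‖ξ‖)⁻¹ • ξ = (‖ξ‖)⁻¹ • ((‖ξ‖ : ℝ) • e - ξ) := by
      rw [smul_sub, smul_smul, inv_mul_cancel₀ hξpos.ne', one_smul]
    have hsplit : (‖ξ‖ : ℝ) • e - ξ = ((‖ξ‖ - 2⁻¹ : ℝ)) • e - (ξ - (2⁻¹:ℝ) • e) := by
      rw [sub_smul]; abel
    have hnum : ‖(‖ξ‖ : ℝ) • e - ξ‖ ≤ a/4 := by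
      rw [hsplit]
      refine (norm_sub_le _ _).trans ?_
      rw [norm_smul, hnorme, mul_one, Real.norm_eq_abs]
      have := abs_le.mpr ⟨le_of_lt habs1, le_of_lt habs2⟩
      linarith [this, hξ.le]
    rw [key, norm_smul, norm_inv, norm_norm]
    have h716 : (7:ℝ)/16 ≤ ‖ξ‖ := by linarith
    have hinv : (‖ξ‖)⁻¹ ≤ 16/7 := by
      rw [inv_le_comm₀ hξpos (by norm_num)]
      linarith
    nlinarith [norm_nonneg ((‖ξ‖ : ℝ) • e - ξ), inv_nonneg.mpr (norm_nonneg ξ)]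
  have hKsub : K ⊆ Metric.closedBall (0 : Cn n) 1 := fun ξ hξ => by
    rw [Metric.mem_closedBall, dist_zero_right]; exact hξ.2.2
  have hVtop : volume K ≠ ⊤ := ((measure_mono hKsub).trans_lt measure_closedBall_lt_top).ne
  -- scaling K by (1+ε)
  have hscale1 : (1+ε) • K ⊆ D ∪ K := by
    rintro ξ ⟨η, hη, rfl⟩
    obtain ⟨hη0, hηa, hη1⟩ := hη
    have hε1' : (0:ℝ) < 1 + ε := by linarith
    have hdir := dir_smul hε1' η
    have hnn : ‖(1+ε) • η‖ = (1+ε) * ‖η‖ := by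
      rw [norm_smul, Real.norm_eq_abs, abs_of_pos hε1']
    have hne : (1+ε) • η ≠ 0 := smul_ne_zero hε1'.ne' hη0
    rcases le_total ‖(1+ε) • η‖ 1 with h | h
    · right; exact ⟨hne, by rw [hdir]; exact hηa, h⟩
    · left
      refine ⟨hne, by rw [hdir]; exact hηa, h, ?_⟩
      rw [hnn]
      nlinarith [norm_nonneg η]
  have hsmulK : volume ((1+ε) • K) =
      ENNReal.ofReal ((1+ε) ^ (Module.finrank ℝ (Cn n))) * volume K := by
    rw [Measure.addHaar_smul, abs_of_pos (by positivity : (0:ℝ) < (1+ε) ^ _)]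
  have h1 : ENNReal.ofReal ((1+ε) ^ (Module.finrank ℝ (Cn n))) * volume K
      ≤ volume D + volume K := by
    rw [← hsmulK]; exact (measure_mono hscale1).trans (measure_union_le _ _)
  have hDlb : ENNReal.ofReal ε * volume K ≤ volume D := by
    have h2 : (ENNReal.ofReal ((1+ε) ^ (Module.finrank ℝ (Cn n))) - 1) * volume K
        ≤ volume D := by
      rw [ENNReal.sub_mul (fun _ _ => hVtop), one_mul, tsub_le_iff_right]
      exact h1
    refine le_trans (mul_le_mul_left ?_ _) h2
    rw [← ENNReal.ofReal_one, ← ENNReal.ofReal_sub _ (by norm_num : (0:ℝ) ≤ 1)]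
    apply ENNReal.ofReal_le_ofReal
    exact bernoulli_aux _ hd1 ε hε
  have hKlb : c0 ≤ volume K := by
    rw [hc0, show volume (Metric.ball (0:Cn n) (a/8))
        = volume (Metric.ball ((2⁻¹:ℝ) • e) (a/8)) from
      (Measure.addHaar_ball_center volume _ _).symm]
    exact measure_mono hballK
  -- B contains ‖z‖ • D
  have hscale2 : ‖z‖ • D ⊆ B := by
    rintro ξ ⟨η, hη, rfl⟩
    obtain ⟨hη0, hηa, hη1, hη2⟩ := hη
    have hdir := dir_smul hzpos η
    have hnn : ‖‖z‖ • η‖ = ‖z‖ * ‖η‖ := by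
      rw [norm_smul, Real.norm_eq_abs, abs_of_pos hzpos]
    refine ⟨smul_ne_zero hzpos.ne' hη0, by rw [hdir]; exact hηa, ?_, ?_⟩
    · rw [hnn]; nlinarith
    · rw [hnn]; nlinarith
  have hBlb : ENNReal.ofReal ε * C ≤ volume B := by
    calc ENNReal.ofReal ε * C
        = ENNReal.ofReal ((2:ℝ)⁻¹ ^ (Module.finrank ℝ (Cn n))) * (ENNReal.ofReal ε * c0) := by
          rw [hCdef]; ring
      _ ≤ ENNReal.ofReal (‖z‖ ^ (Module.finrank ℝ (Cn n))) * (ENNReal.ofReal ε * volume K) := by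
          gcongr
      _ ≤ ENNReal.ofReal (‖z‖ ^ (Module.finrank ℝ (Cn n))) * volume D := by gcongr
      _ = volume (‖z‖ • D) := by
          rw [Measure.addHaar_smul, abs_of_pos (by positivity : (0:ℝ) < ‖z‖ ^ _)]
      _ ≤ volume B := measure_mono hscale2
  -- B is inside the exceptional set union a sphere
  have hBS : B ⊆ {ξ : Cn n | ξ ∈ Metric.ball (0 : Cn n) 1 ∧ 1 - 3*ε < ‖ξ‖ ∧
      u ξ < ((-(A * (3*ε)) : ℝ) : EReal)} ∪ Metric.sphere (0 : Cn n) (1 - 3*ε) := by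
    intro ξ hξ
    obtain ⟨hξ0, hang, hl, hu'⟩ := hξ
    have h1 : ‖ξ‖ < 1 := by nlinarith
    rcases lt_or_eq_of_le (show 1 - 3*ε ≤ ‖ξ‖ by linarith) with h2 | h2
    · left
      refine ⟨mem_ball_zero_iff.mpr h1, h2, ?_⟩
      have hle : u ξ ≤ ⨆ ξ ∈ B, u ξ := le_biSup u ⟨hξ0, hang, hl, hu'⟩
      have hlt := lt_of_le_of_lt hle hcon
      have hree : (-(3*A*ε) : ℝ) = -(A*(3*ε)) := by ring
      rwa [hree] at hlt
    · right
      rw [mem_sphere_zero_iff_norm]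
      exact h2.symm
  have hSub : ENNReal.ofReal ε * C ≤
      volume {ξ : Cn n | ξ ∈ Metric.ball (0 : Cn n) 1 ∧ 1 - 3*ε < ‖ξ‖ ∧
        u ξ < ((-(A * (3*ε)) : ℝ) : EReal)} := by
    refine hBlb.trans ?_
    refine (measure_mono hBS).trans ?_
    refine (measure_union_le _ _).trans ?_
    rw [Measure.addHaar_sphere, add_zero]
  have hfin := he0 (show dist (3*ε) (0:ℝ) < e0 by
      rw [Real.dist_0_eq_abs, abs_of_pos (by linarith)]; exact hεa1)
    (Set.mem_Ioi.mpr (by linarith))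
  rw [ENNReal.div_lt_iff (Or.inl (by rw [Ne, ENNReal.ofReal_eq_zero, not_le]; linarith))
    (Or.inl ENNReal.ofReal_ne_top)] at hfin
  have heq : C / 3 * ENNReal.ofReal (3*ε) = ENNReal.ofReal ε * C := by
    rw [ENNReal.ofReal_mul (by norm_num : (0:ℝ) ≤ 3), ENNReal.ofReal_ofNat,
      ← mul_assoc, ENNReal.div_mul_cancel (by norm_num) (by norm_num), mul_comm]
  exact absurd (hSub.trans_lt (hfin.trans_eq heq)) (lt_irrefl _)

end
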